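/- Let G = Cₘ × D₂ₙ ≤ SL₃(ℂ) with m ≥ 3 odd, where Cₘ is embedded as the diagonal matrices diag(εₘ, εₘ, εₘ⁻²) and D₂ₙ of odd degree n acts on the first two coordinates. Then the skew-group algebra ℂ[x₁,x₂,x₃] ∗ G admits a 3-preprojective cut. -/

import Mathlib

open Matrix

noncomputable section

/-- A matrix representation is irreducible if the only invariant subspaces of `ℂⁿ`
are `⊥` and `⊤`. -/
def MatRep.IsIrred {G : Type*} [Group G] {n : ℕ}
    (ρ : G →* Matrix.GeneralLinearGroup (Fin n) ℂ) : Prop :=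
  ∀ p : Submodule ℂ (Fin n → ℂ),
    (∀ g : G, ∀ v ∈ p, Matrix.mulVec (ρ g : Matrix (Fin n) (Fin n) ℂ) v ∈ p) →
      p = ⊥ ∨ p = ⊤

/-- The standard inner product of two class functions / characters of a finite group:
`(α, β) = |G|⁻¹ ∑ α(g) β(g⁻¹)`. -/
def charInner (G : Type*) [Group G] [Fintype G] (α β : G → ℂ) : ℂ :=
  (Fintype.card G : ℂ)⁻¹ * ∑ g : G, α g * β g⁻¹

/-- `χ : G → ℂ` is an irreducible character: the character of some irreducible
matrix representation. -/
def IsIrredChar (G : Type*) [Group G] (χ : G → ℂ) : Prop :=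
  ∃ (n : ℕ) (σ : G →* Matrix.GeneralLinearGroup (Fin n) ℂ), MatRep.IsIrred σ ∧
    ∀ g : G, χ g = Matrix.trace (σ g : Matrix (Fin n) (Fin n) ℂ)

/-- The McKay quiver of a finite group `G` with respect to a representation
`ρ : G →* GL₃(ℂ)`: vertices are (indexed by) the irreducible characters of `G`, and the
number of arrows from `χ_v` to `χ_w` is the multiplicity `(χ_v, χ_w · χ_ρ)`. -/
structure McKayQuiver (G : Type*) [Group G] [Fintype G]
    (ρ : G →* Matrix.GeneralLinearGroup (Fin 3) ℂ) where
  vert : Type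
  [instFintypeVert : Fintype vert]
  ch : vert → G → ℂ
  ch_irred : ∀ v, IsIrredChar G (ch v)
  ch_inj : Function.Injective ch
  ch_surj : ∀ χ : G → ℂ, IsIrredChar G χ → ∃ v, ch v = χ
  arr : vert → vert → ℕ
  arr_spec : ∀ v w, (arr v w : ℂ)
    = charInner G (ch v)
        (fun g => ch w g * Matrix.trace (ρ g : Matrix (Fin 3) (Fin 3) ℂ))

attribute [instance] McKayQuiver.instFintypeVert

namespace McKayQuiver

variable {G : Type*} [Group G] [Fintype G]
  {ρ : G →* Matrix.GeneralLinearGroup (Fin 3) ℂ}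

/-- The McKay quiver has a loop. -/
def HasLoop (Q : McKayQuiver G ρ) : Prop := ∃ v, 1 ≤ Q.arr v v

/-- A `3`-preprojective cut of the McKay quiver: an assignment of degrees `0` and `1`
to the arrows such that every `3`-cycle is homogeneous of total degree `1` and the
subquiver of degree-`0` arrows is acyclic (so that the degree-`0` part of the algebra
is finite dimensional). -/
def IsCut (Q : McKayQuiver G ρ) (d : ∀ v w : Q.vert, Fin (Q.arr v w) → ℕ) : Prop :=
  (∀ v w (a : Fin (Q.arr v w)), d v w a ≤ 1) ∧
  (∀ (x y z : Q.vert) (a : Fin (Q.arr x y)) (b : Fin (Q.arr y z)) (c : Fin (Q.arr z x)),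
      d x y a + d y z b + d z x c = 1) ∧
  ¬ ∃ f : ℕ → Q.vert, ∀ i : ℕ, ∃ a : Fin (Q.arr (f i) (f (i + 1))), d (f i) (f (i + 1)) a = 0

/-- The skew-group algebra `ℂ[x₁,x₂,x₃] ∗ G ≃ ℂQ_G/I` admits a `3`-preprojective cut. -/
def HasCut (Q : McKayQuiver G ρ) : Prop := ∃ d, Q.IsCut d

end McKayQuiver

/-- Let `G = Cₘ × D₂ₙ ≤ SL₃(ℂ)` with `m ≥ 3` odd, `n ≥ 3` odd, where `Cₘ` is
embedded as the diagonal matrices `diag(εₘ, εₘ, εₘ⁻²)` and the dihedral group `D₂ₙ` of odd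
degree `n` acts on the first two coordinates (via `r ↦ diag(εₙ, εₙ⁻¹, 1)` and
`s ↦ antidiag(-1,-1) ⊕ (-1)`, i.e. the minimal group `H_{2n,1}` together with the inverse
determinant on the third coordinate).  Then the skew-group algebra
`ℂ[x₁,x₂,x₃] ∗ G ≃ ℂQ_G/I` admits a `3`-preprojective cut. -/

private lemma schur_scalar' {H : Type*} [Group H] {k : ℕ} (hk : k ≠ 0)
    (σ : H →* Matrix.GeneralLinearGroup (Fin k) ℂ) (hirr : MatRep.IsIrred σ)
    (c : H) (hcen : ∀ g : H, c * g = g * c) :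
    ∃ ω : ℂ, (σ c : Matrix (Fin k) (Fin k) ℂ) = ω • 1 := by
  haveI : Nonempty (Fin k) := Fin.pos_iff_nonempty.mp (Nat.pos_of_ne_zero hk)
  set A : Matrix (Fin k) (Fin k) ℂ := (σ c : Matrix (Fin k) (Fin k) ℂ) with hA
  set f : Module.End ℂ (Fin k → ℂ) := Matrix.mulVecLin A with hf
  obtain ⟨μ, hμ⟩ := Module.End.exists_eigenvalue f
  refine ⟨μ, ?_⟩
  have hinv : ∀ g : H, ∀ v ∈ f.eigenspace μ,
      (σ g : Matrix (Fin k) (Fin k) ℂ) *ᵥ v ∈ f.eigenspace μ := by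
    intro g v hv
    rw [Module.End.mem_eigenspace_iff] at hv ⊢
    have hAB : A * (σ g : Matrix (Fin k) (Fin k) ℂ)
        = (σ g : Matrix (Fin k) (Fin k) ℂ) * A := by
      rw [hA, ← Units.val_mul, ← Units.val_mul, ← _root_.map_mul, ← _root_.map_mul, hcen]
    simp only [hf, Matrix.mulVecLin_apply] at hv ⊢
    rw [Matrix.mulVec_mulVec, hAB, ← Matrix.mulVec_mulVec, hv, Matrix.mulVec_smul]
  rcases hirr _ hinv with h | h
  · exact absurd h hμ
  · have hall : ∀ v : Fin k → ℂ, A *ᵥ v = μ • v := by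
      intro v
      have hv : v ∈ f.eigenspace μ := h ▸ Submodule.mem_top
      have := Module.End.mem_eigenspace_iff.mp hv
      simpa only [hf, Matrix.mulVecLin_apply] using this
    ext i j
    have h2 := congrFun (hall (Pi.single j 1)) i
    simp only [Matrix.mulVec_single, mul_one, Pi.smul_apply, Pi.single_apply,
      smul_eq_mul, MulOpposite.op_one, one_smul, Matrix.col_apply] at h2
    rw [Matrix.smul_apply, Matrix.one_apply, smul_eq_mul, h2]

private lemma aux_mul_cases (m t x : ℤ) (hm : 0 < m) (hx : x = m * t)
    (hlo : -(2*m) < x) (hhi : x < 2*m) : x = -m ∨ x = 0 ∨ x = m := by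
  have h1 : -1 ≤ t := by
    by_contra hcon
    push_neg at hcon
    have ht : t ≤ -2 := by omega
    have h2 := mul_le_mul_of_nonneg_left ht (le_of_lt hm)
    linarith
  have h2 : t ≤ 1 := by
    by_contra hcon
    push_neg at hcon
    have ht : (2:ℤ) ≤ t := by omega
    have h3 := mul_le_mul_of_nonneg_left ht (le_of_lt hm)
    linarith
  interval_cases t
  · left; linarith
  · right; left; linarith
  · right; right; linarith

theorem cyclic_times_dihedral_has_cut (m n : ℕ)
    (hm3 : 3 ≤ m) (hmodd : Odd m) (hn3 : 3 ≤ n) (hnodd : Odd n)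
    (G : Type) [Group G] [Fintype G]
    (e : G ≃* Multiplicative (ZMod m) × DihedralGroup n)
    (ρ : G →* Matrix.GeneralLinearGroup (Fin 3) ℂ)
    (hfaith : Function.Injective ρ)
    (hc : ((ρ (e.symm (Multiplicative.ofAdd (1 : ZMod m), 1)) :
        Matrix (Fin 3) (Fin 3) ℂ))
      = Matrix.diagonal ![Complex.exp (2 * Real.pi * Complex.I / m),
          Complex.exp (2 * Real.pi * Complex.I / m),
          (Complex.exp (2 * Real.pi * Complex.I / m) *
            Complex.exp (2 * Real.pi * Complex.I / m))⁻¹])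
    (hr : ((ρ (e.symm (1, DihedralGroup.r 1)) : Matrix (Fin 3) (Fin 3) ℂ))
      = Matrix.diagonal ![Complex.exp (2 * Real.pi * Complex.I / n),
          (Complex.exp (2 * Real.pi * Complex.I / n))⁻¹, 1])
    (hs : ((ρ (e.symm (1, DihedralGroup.sr 0)) : Matrix (Fin 3) (Fin 3) ℂ))
      = !![0, -1, 0; -1, 0, 0; 0, 0, -1]) :
    ∀ Q : McKayQuiver G ρ, Q.HasCut := by
  intro Q
  classical
  have hm0 : m ≠ 0 := by omega
  haveI : NeZero m := ⟨hm0⟩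
  set ε : ℂ := Complex.exp (2 * Real.pi * Complex.I / m) with hεdef
  have hprim : IsPrimitiveRoot ε m := Complex.isPrimitiveRoot_exp m hm0
  have hεne : ε ≠ 0 := Complex.exp_ne_zero _
  set c : G := e.symm (Multiplicative.ofAdd (1 : ZMod m), 1) with hcdef
  have hec : e c = (Multiplicative.ofAdd (1 : ZMod m), 1) := e.apply_symm_apply _
  -- c is central
  have hcen : ∀ g : G, c * g = g * c := by
    intro g
    apply e.injective
    rw [_root_.map_mul, _root_.map_mul, hec]
    apply Prod.ext
    · exact mul_comm _ _
    · simp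
  -- c has order dividing m
  have hcm : c ^ m = 1 := by
    apply e.injective
    rw [map_pow, hec]
    have h0 : (Multiplicative.ofAdd (1 : ZMod m)) ^ m = 1 := by
      have hz : m • (1 : ZMod m) = 0 := by
        simp [nsmul_eq_mul, ZMod.natCast_self]
      rw [← ofAdd_nsmul, hz, ofAdd_zero]
    have h1 : ((Multiplicative.ofAdd (1 : ZMod m), (1 : DihedralGroup n)) :
        Multiplicative (ZMod m) × DihedralGroup n) ^ m
        = (Multiplicative.ofAdd (1 : ZMod m) ^ m, (1 : DihedralGroup n) ^ m) :=
      Prod.ext (Prod.pow_fst _ _) (Prod.pow_snd _ _)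
    rw [h1, h0, one_pow, _root_.map_one e]
    rfl
  -- central character of each vertex
  have hΦ : ∀ v : Q.vert, ∃ ω : ℂ, ω ^ m = 1 ∧
      ∀ g : G, Q.ch v (c * g) = ω * Q.ch v g := by
    intro v
    obtain ⟨k, σ, hirr, hch⟩ := Q.ch_irred v
    rcases Nat.eq_zero_or_pos k with hk | hk
    · subst hk
      refine ⟨1, one_pow m, ?_⟩
      intro g
      have hz : ∀ x : G, Q.ch v x = 0 := by
        intro x
        rw [hch x]
        simp [Matrix.trace]
      simp [hz]
    · obtain ⟨ω, hω⟩ := schur_scalar' hk.ne' σ hirr c hcen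
      refine ⟨ω, ?_, ?_⟩
      · have h1 : ((σ c : Matrix (Fin k) (Fin k) ℂ)) ^ m = 1 := by
          rw [← Units.val_pow_eq_pow_val, ← map_pow, hcm, _root_.map_one, Units.val_one]
        rw [hω, smul_pow, one_pow] at h1
        have h2 := congrFun (congrFun h1 ⟨0, hk⟩) ⟨0, hk⟩
        simpa [Matrix.smul_apply, Matrix.one_apply] using h2
      · intro g
        rw [hch, hch, _root_.map_mul, Units.val_mul, hω, Matrix.smul_mul, one_mul,
          Matrix.trace_smul, smul_eq_mul]
  choose ω hω1 hω2 using hΦ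
  choose κ hκ using fun v => hprim.eq_pow_of_pow_eq_one (hω1 v)
  have hκlt : ∀ v, κ v < m := fun v => (hκ v).1
  have hκε : ∀ v, ε ^ κ v = ω v := fun v => (hκ v).2
  -- matrices of inverses
  set M : G → Matrix (Fin 3) (Fin 3) ℂ :=
    fun g => ((ρ g⁻¹ : Matrix (Fin 3) (Fin 3) ℂ)) with hMdef
  have hMc : ∀ h : G, M (c⁻¹ * h)
      = M h * (ρ c : Matrix (Fin 3) (Fin 3) ℂ) := by
    intro h
    show ((ρ (c⁻¹ * h)⁻¹ : Matrix (Fin 3) (Fin 3) ℂ)) = _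
    rw [_root_.mul_inv_rev, inv_inv, _root_.map_mul, Units.val_mul]
  -- arrow existence forces weight relation
  have key : ∀ v w : Q.vert, Q.arr v w ≠ 0 →
      ω v = ω w * ε ∨ ω w = ω v * (ε * ε) := by
    intro v w hvw
    set S1 : ℂ := ∑ g : G, Q.ch v g * (Q.ch w g⁻¹ * (M g 0 0 + M g 1 1)) with hS1def
    set S2 : ℂ := ∑ g : G, Q.ch v g * (Q.ch w g⁻¹ * (M g 2 2)) with hS2def
    have harr : (Q.arr v w : ℂ) = (Fintype.card G : ℂ)⁻¹ * (S1 + S2) := by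
      rw [Q.arr_spec v w]
      unfold charInner
      congr 1
      rw [hS1def, hS2def, ← Finset.sum_add_distrib]
      apply Finset.sum_congr rfl
      intro g _
      show Q.ch v g * (Q.ch w g⁻¹ * Matrix.trace ((ρ g⁻¹ : Matrix (Fin 3) (Fin 3) ℂ))) = _
      have htr : Matrix.trace ((ρ g⁻¹ : Matrix (Fin 3) (Fin 3) ℂ))
          = M g 0 0 + M g 1 1 + M g 2 2 := Matrix.trace_fin_three _
      rw [htr]
      ring
    have hgen : ∀ (T : ℂ) (E : G → ℂ), (∀ h : G, E (c⁻¹ * h) = T * E h) →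
        ω v * (∑ g : G, Q.ch v g * (Q.ch w g⁻¹ * E g))
          = (ω w * T) * (∑ g : G, Q.ch v g * (Q.ch w g⁻¹ * E g)) := by
      intro T E hE
      have hsub : (∑ g : G, Q.ch v g * (Q.ch w g⁻¹ * E g))
          = ∑ g : G, Q.ch v (c⁻¹ * g) * (Q.ch w (c⁻¹ * g)⁻¹ * E (c⁻¹ * g)) := by
        exact (Equiv.sum_comp (Equiv.mulLeft c⁻¹)
          (fun g => Q.ch v g * (Q.ch w g⁻¹ * E g))).symm
      conv_lhs => rw [hsub]
      rw [Finset.mul_sum, Finset.mul_sum]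
      apply Finset.sum_congr rfl
      intro g _
      have h1 : ω v * Q.ch v (c⁻¹ * g) = Q.ch v g := by
        have h := hω2 v (c⁻¹ * g)
        rw [mul_inv_cancel_left] at h
        exact h.symm
      have h2 : Q.ch w (c⁻¹ * g)⁻¹ = ω w * Q.ch w g⁻¹ := by
        rw [_root_.mul_inv_rev, inv_inv, ← hcen g⁻¹, hω2 w g⁻¹]
      rw [h2, hE, ← h1]
      ring
    have hE1 : ∀ h : G, M (c⁻¹ * h) 0 0 + M (c⁻¹ * h) 1 1
        = ε * (M h 0 0 + M h 1 1) := by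
      intro h
      rw [hMc, hc]
      rw [Matrix.mul_diagonal, Matrix.mul_diagonal]
      show M h 0 0 * ε + M h 1 1 * ε = _
      ring
    have hE2 : ∀ h : G, M (c⁻¹ * h) 2 2 = (ε * ε)⁻¹ * (M h 2 2) := by
      intro h
      rw [hMc, hc, Matrix.mul_diagonal]
      show M h 2 2 * (ε * ε)⁻¹ = _
      ring
    have hrel1 : ω v * S1 = (ω w * ε) * S1 :=
      hgen ε (fun g => M g 0 0 + M g 1 1) hE1
    have hrel2 : ω v * S2 = (ω w * (ε * ε)⁻¹) * S2 :=
      hgen ((ε * ε)⁻¹) (fun g => M g 2 2) hE2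
    have harrne : (Q.arr v w : ℂ) ≠ 0 := Nat.cast_ne_zero.mpr hvw
    have hSne : S1 ≠ 0 ∨ S2 ≠ 0 := by
      by_contra hcon
      push_neg at hcon
      rw [harr, hcon.1, hcon.2, add_zero, mul_zero] at harrne
      exact harrne rfl
    have hεεne : ε * ε ≠ 0 := mul_ne_zero hεne hεne
    rcases hSne with hne | hne
    · left; exact mul_right_cancel₀ hne hrel1
    · right
      have h3 : ω v = ω w * (ε * ε)⁻¹ := mul_right_cancel₀ hne hrel2
      rw [h3]
      field_simp
  -- convert to integer relations on the exponents
  have hkey : ∀ v w : Q.vert, Q.arr v w ≠ 0 →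
      ((κ w : ℤ) - κ v = -1 ∨ (κ w : ℤ) - κ v = (m : ℤ) - 1 ∨
        (κ w : ℤ) - κ v = 2 ∨ (κ w : ℤ) - κ v = 2 - m) := by
    intro v w hvw
    have hcong : ∀ a b : ℕ, ε ^ a = ε ^ b → (m : ℤ) ∣ (a : ℤ) - b := by
      intro a b hab
      rcases le_total b a with hle | hle
      · have hpow : ε ^ (a - b) * ε ^ b = ε ^ b := by
          rw [← pow_add, Nat.sub_add_cancel hle, hab]
        have hone : ε ^ (a - b) = 1 :=
          mul_right_cancel₀ (pow_ne_zero b hεne) (by rw [hpow, one_mul])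
        have hdvd : m ∣ a - b := hprim.dvd_of_pow_eq_one _ hone
        have := Int.natCast_dvd_natCast.mpr hdvd
        rwa [Nat.cast_sub hle] at this
      · have hpow : ε ^ (b - a) * ε ^ a = ε ^ a := by
          rw [← pow_add, Nat.sub_add_cancel hle, hab]
        have hone : ε ^ (b - a) = 1 :=
          mul_right_cancel₀ (pow_ne_zero a hεne) (by rw [hpow, one_mul])
        have hdvd : m ∣ b - a := hprim.dvd_of_pow_eq_one _ hone
        have h2 := Int.natCast_dvd_natCast.mpr hdvd
        rw [Nat.cast_sub hle] at h2
        exact dvd_sub_comm.mp h2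
    have hv := hκlt v
    have hw := hκlt w
    have hm' : (0 : ℤ) < m := by exact_mod_cast Nat.pos_of_ne_zero hm0
    rcases key v w hvw with h1 | h1
    · -- ε ^ κ v = ε ^ (κ w + 1)
      have hpw : ε ^ κ v = ε ^ (κ w + 1) := by
        rw [pow_succ, hκε, hκε, h1]
      have hdvd := hcong _ _ hpw
      obtain ⟨t, ht⟩ := hdvd
      have hcase := aux_mul_cases (m : ℤ) t ((κ v : ℤ) - (κ w + 1)) hm'
        (by push_cast; push_cast at ht; linarith)
        (by push_cast; omega) (by push_cast; omega)
      push_cast at hcase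
      omega
    · -- ε ^ κ w = ε ^ (κ v + 2)
      have hpw : ε ^ κ w = ε ^ (κ v + 2) := by
        rw [pow_add, hκε, hκε, h1, pow_two]
      have hdvd := hcong _ _ hpw
      obtain ⟨t, ht⟩ := hdvd
      have hcase := aux_mul_cases (m : ℤ) t ((κ w : ℤ) - (κ v + 2)) hm'
        (by push_cast; push_cast at ht; linarith)
        (by push_cast; omega) (by push_cast; omega)
      push_cast at hcase
      omega
  -- define the cut
  refine ⟨fun v w _ => if κ w < κ v then 0 else 1, ?_, ?_, ?_⟩
  · intro v w a
    show (if κ w < κ v then 0 else 1) ≤ 1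
    split <;> omega
  · intro x y z a b c'
    obtain ⟨t, ht⟩ := hmodd
    have hxy := hkey x y (by have := a.isLt; omega)
    have hyz := hkey y z (by have := b.isLt; omega)
    have hzx := hkey z x (by have := c'.isLt; omega)
    have h1 := hκlt x
    have h2 := hκlt y
    have h3 := hκlt z
    show (if κ y < κ x then 0 else 1) + (if κ z < κ y then 0 else 1)
        + (if κ x < κ z then 0 else 1) = 1
    split_ifs <;> omega
  · rintro ⟨f, hf⟩
    have hdec : ∀ i : ℕ, κ (f (i + 1)) < κ (f i) := by
      intro i
      obtain ⟨a, ha⟩ := hf i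
      by_contra hcon
      have ha' : (if κ (f (i + 1)) < κ (f i) then 0 else 1) = 0 := ha
      rw [if_neg hcon] at ha'
      exact one_ne_zero ha'
    have hmono : ∀ i : ℕ, κ (f i) + i ≤ κ (f 0) := by
      intro i
      induction i with
      | zero => simp
      | succ j ih =>
        have := hdec j
        omega
    have := hmono (κ (f 0) + 1)
    omega
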